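/- Let R be a generically Gorenstein 1-dimensional Cohen–Macaulay Noetherian ring and let R ⊆ S ⊆ Q(R) be a module finite birational extension. Then S is a reflexive R-module if and only if every finitely generated reflexive S-module is reflexive as an R-module. -/

import Mathlib

set_option maxHeartbeats 1000000
set_option synthInstance.maxHeartbeats 400000

open CategoryTheory

universe u

/-- The `i`-th Ext module `Ext_A^i(M, N)` over a commutative ring `A`. -/
noncomputable def ExtModule (A : Type u) [CommRing A] (M N : Type u)
    [AddCommGroup M] [Module A M] [AddCommGroup N] [Module A N] (i : ℕ) : ModuleCat.{u} A :=
  ((Ext A (ModuleCat.{u} A) i).obj (Opposite.op (ModuleCat.of A M))).obj (ModuleCat.of A N)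

/-- A module is torsion-free if nonzerodivisors of the ring act injectively. -/
def IsTorsionFreeModule (A : Type*) [CommRing A] (M : Type*) [AddCommGroup M]
    [Module A M] : Prop :=
  ∀ a ∈ nonZeroDivisors A, ∀ m : M, a • m = 0 → m = 0

/-- The grade of an ideal `J`: the length of a maximal regular sequence contained in `J`. -/
noncomputable def Ideal.grade {A : Type*} [CommRing A] (J : Ideal A) : ℕ∞ :=
  sSup {n : ℕ∞ | ∃ rs : List A, (rs.length : ℕ∞) = n ∧ (∀ r ∈ rs, r ∈ J) ∧
    RingTheory.Sequence.IsWeaklyRegular A rs}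

/-- A Cohen–Macaulay local ring: Noetherian local with depth equal to Krull dimension. -/
def IsCohenMacaulayLocalRing (A : Type*) [CommRing A] : Prop :=
  IsNoetherianRing A ∧ ∃ _ : IsLocalRing A,
    ((IsLocalRing.maximalIdeal A).grade : WithBot ℕ∞) = ringKrullDim A

/-- A Cohen–Macaulay ring: Noetherian, all localizations at primes are CM local rings. -/
def IsCohenMacaulayRing (A : Type*) [CommRing A] : Prop :=
  IsNoetherianRing A ∧ ∀ (p : Ideal A) [p.IsPrime],
    IsCohenMacaulayLocalRing (Localization.AtPrime p)

/-- A Gorenstein local ring: Noetherian local of finite self-injective dimension,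
expressed via vanishing of `Ext^{n+1}(A/I, A)` for all ideals `I` (Baer's criterion). -/
def IsGorensteinLocalRing (A : Type u) [CommRing A] : Prop :=
  IsLocalRing A ∧ IsNoetherianRing A ∧
    ∃ n : ℕ, ∀ I : Ideal A, Subsingleton (ExtModule A (A ⧸ I) A (n + 1))

/-- A Gorenstein ring: Noetherian, all localizations at maximal ideals are Gorenstein local. -/
def IsGorensteinRing (A : Type u) [CommRing A] : Prop :=
  IsNoetherianRing A ∧ ∀ (m : Ideal A) [m.IsMaximal],
    IsGorensteinLocalRing (Localization.AtPrime m)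

/-- Generically Gorenstein: the localization at every associated prime is Gorenstein. -/
def IsGenericallyGorenstein (A : Type u) [CommRing A] : Prop :=
  ∀ (p : Ideal A) [p.IsPrime], p ∈ associatedPrimes A A →
    IsGorensteinLocalRing (Localization.AtPrime p)

/-- The trace ideal of a module: the sum of the images of all linear maps to the ring. -/
def traceIdeal (A : Type*) [CommRing A] (M : Type*) [AddCommGroup M] [Module A M] :
    Ideal A :=
  ⨆ f : M →ₗ[A] A, LinearMap.range f

/-- The image of an ideal inside the total ring of fractions. -/
noncomputable def Ideal.toFrac {A : Type u} [CommRing A] (I : Ideal A) :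
    Submodule A (FractionRing A) :=
  Submodule.map (Algebra.linearMap A (FractionRing A)) I

/-- The conductor `(R : S)` of a birational extension `R ⊆ S ⊆ Q(R)`,
as a submodule of the total ring of fractions. -/
noncomputable def conductorFrac (R : Type u) [CommRing R]
    (S : Subalgebra R (FractionRing R)) : Submodule R (FractionRing R) :=
  (1 : Submodule R (FractionRing R)) / Subalgebra.toSubmodule S

/-- `M ∈ Ω CM(A)`: there is an exact sequence `0 → M → P → N → 0` with `P` a finitely
generated projective `A`-module and `N` a finitely generated torsion-free
(equivalently, over a 1-dimensional CM ring, maximal Cohen–Macaulay) `A`-module. -/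
def InSyzygyOfCM (A : Type u) [CommRing A] (M : Type u) [AddCommGroup M] [Module A M] :
    Prop :=
  ∃ (P N : Type u) (_ : AddCommGroup P) (_ : Module A P) (_ : AddCommGroup N)
    (_ : Module A N), Module.Projective A P ∧ Module.Finite A P ∧ Module.Finite A N ∧
      IsTorsionFreeModule A N ∧
      ∃ (f : M →ₗ[A] P) (g : P →ₗ[A] N),
        Function.Injective f ∧ Function.Surjective g ∧ LinearMap.range f = LinearMap.ker g


section Aux

variable {R : Type u} [CommRing R] {S : Subalgebra R (FractionRing R)}
variable {M : Type u} [AddCommGroup M] [Module R M] [Module S M] [IsScalarTower R S M]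

/-- Any `R`-linear functional `M → R` is automatically `S`-semilinear when viewed inside the
total fraction ring; this packages it as an `S`-linear map `M → S`. -/
noncomputable def toSdual (f : M →ₗ[R] R) : M →ₗ[S] S where
  toFun m := ⟨algebraMap R (FractionRing R) (f m), S.algebraMap_mem _⟩
  map_add' x y := by
    ext
    simp [map_add]
  map_smul' t m := by
    obtain ⟨⟨a, u⟩, hu⟩ := IsLocalization.mk'_surjective (nonZeroDivisors R) (t : FractionRing R)
    have hspec : (t : FractionRing R) * algebraMap R (FractionRing R) (u : R) =
        algebraMap R (FractionRing R) a := by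
      rw [← hu]; exact IsLocalization.mk'_spec _ a u
    have hut : (u : R) • t = a • (1 : S) := by
      ext
      rw [SetLike.val_smul, SetLike.val_smul, OneMemClass.coe_one, Algebra.smul_def,
        Algebra.smul_def, mul_one, mul_comm]
      exact hspec
    have h2 : (u : R) • (t • m) = a • m := by
      rw [← smul_assoc, hut, smul_assoc, one_smul]
    have hfm : (u : R) * f (t • m) = a * f m := by
      have h1 : f ((u : R) • (t • m)) = (u : R) • f (t • m) := f.map_smul _ _
      rw [h2, f.map_smul, smul_eq_mul, smul_eq_mul] at h1
      exact h1.symm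
    have hunit : IsUnit (algebraMap R (FractionRing R) (u : R)) :=
      IsLocalization.map_units (FractionRing R) u
    refine Subtype.ext ?_
    simp only [RingHom.id_apply, smul_eq_mul, MulMemClass.coe_mul]
    refine hunit.mul_left_cancel ?_
    rw [← map_mul, hfm, map_mul, ← hspec]
    ring

@[simp] lemma toSdual_coe (f : M →ₗ[R] R) (m : M) :
    ((toSdual (S := S) f m : S) : FractionRing R) = algebraMap R (FractionRing R) (f m) := rfl

/-- The underlying function of `clearDenom`. -/
noncomputable def clearDenomFun {r : R}
    (hr : ∀ s : S, ∃ a : R, algebraMap R (FractionRing R) a = r • (s : FractionRing R))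
    (s : S) : R := (hr s).choose

@[simp] lemma clearDenomFun_spec {r : R}
    (hr : ∀ s : S, ∃ a : R, algebraMap R (FractionRing R) a = r • (s : FractionRing R))
    (s : S) : algebraMap R (FractionRing R) (clearDenomFun hr s) = r • (s : FractionRing R) :=
  (hr s).choose_spec

/-- Clearing denominators: given `r` with `r • S ⊆ R`, the induced `R`-linear map `S → R`. -/
noncomputable def clearDenom {r : R}
    (hr : ∀ s : S, ∃ a : R, algebraMap R (FractionRing R) a = r • (s : FractionRing R)) :
    S →ₗ[R] R where
  toFun := clearDenomFun hr
  map_add' x y := by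
    apply IsFractionRing.injective R (FractionRing R)
    simp only [map_add, clearDenomFun_spec, AddMemClass.coe_add, smul_add]
  map_smul' c x := by
    apply IsFractionRing.injective R (FractionRing R)
    simp only [RingHom.id_apply, smul_eq_mul, map_mul, clearDenomFun_spec]
    have h1 : ((c • x : S) : FractionRing R) = algebraMap R (FractionRing R) c * x := by
      rw [SetLike.val_smul, Algebra.smul_def]
    have h2 : (((algebraMap R S) c * x : S) : FractionRing R)
        = algebraMap R (FractionRing R) c * x := by
      push_cast
      ring
    simp only [Algebra.smul_def, h1, h2]
    try ring
    all_goals simp only [Algebra.smul_def]; ring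

lemma clearDenom_spec {r : R}
    (hr : ∀ s : S, ∃ a : R, algebraMap R (FractionRing R) a = r • (s : FractionRing R))
    (s : S) : algebraMap R (FractionRing R) (clearDenom hr s) = r • (s : FractionRing R) :=
  (hr s).choose_spec

end Aux

/-- `S` is a reflexive `R`-module iff every finitely generated reflexive
`S`-module is reflexive as an `R`-module. -/
theorem reflexive_iff_refl_descends (R : Type u) [CommRing R]
    (hCM : IsCohenMacaulayRing R) (hdim : ringKrullDim R = 1)
    (hGG : IsGenericallyGorenstein R)
    (S : Subalgebra R (FractionRing R)) (hfin : Module.Finite R S) :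
    Module.IsReflexive R S ↔
      ∀ (M : Type u) [AddCommGroup M] [Module R M] [Module S M] [IsScalarTower R S M],
        Module.Finite S M → Module.IsReflexive S M → Module.IsReflexive R M := by
  constructor
  · intro hS M _ _ _ _ _ hM
    haveI := hS
    haveI := hM
    have hSinj := (Module.bijective_dual_eval R S).injective
    have hSsurj := (Module.bijective_dual_eval R S).surjective
    have hMinj := (Module.bijective_dual_eval S M).injective
    have hMsurj := (Module.bijective_dual_eval S M).surjective
    obtain ⟨T, hT⟩ := hfin.fg_top
    obtain ⟨u, hu⟩ := IsLocalization.exist_integer_multiples (nonZeroDivisors R)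
      T (fun s : S => (s : FractionRing R))
    set r : R := (u : R) with hrdef
    have hr : ∀ s : S, ∃ a : R, algebraMap R (FractionRing R) a = r • (s : FractionRing R) := by
      intro s
      have hs : s ∈ Submodule.span R (T : Set S) := by rw [hT]; trivial
      refine Submodule.span_induction (p := fun (x : S) _ => ∃ a : R,
        algebraMap R (FractionRing R) a = r • (x : FractionRing R)) ?_ ?_ ?_ ?_ hs
      · intro x hx
        obtain ⟨a, ha⟩ := hu x hx
        exact ⟨a, ha⟩
      · exact ⟨0, by simp⟩
      · rintro x y _ _ ⟨a, ha⟩ ⟨b, hb⟩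
        exact ⟨a + b, by rw [map_add, ha, hb, AddMemClass.coe_add, smul_add]⟩
      · rintro c x _ ⟨a, ha⟩
        refine ⟨c * a, ?_⟩
        rw [map_mul, SetLike.val_smul, smul_comm r c, Algebra.smul_def, ha]
    refine ⟨⟨?_, ?_⟩⟩
    · -- injectivity of the double-dual evaluation over `R`
      have key : ∀ m : M, Module.Dual.eval R M m = 0 → m = 0 := by
        intro m hm
        apply hMinj
        rw [map_zero]
        refine LinearMap.ext fun g => ?_
        rw [Module.Dual.eval_apply, LinearMap.zero_apply]
        apply hSinj
        rw [map_zero]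
        refine LinearMap.ext fun h => ?_
        rw [Module.Dual.eval_apply, LinearMap.zero_apply]
        have h0 := LinearMap.congr_fun hm (h ∘ₗ g.restrictScalars R)
        simpa [Module.Dual.eval_apply] using h0
      intro x y hxy
      have hxy0 : Module.Dual.eval R M (x - y) = 0 := by rw [map_sub, hxy, sub_self]
      exact sub_eq_zero.mp (key _ hxy0)
    · -- surjectivity of the double-dual evaluation over `R`
      intro Λ
      have key : ∀ g : M →ₗ[S] S, ∃ s : S, ∀ h : S →ₗ[R] R,
          h s = Λ (h ∘ₗ g.restrictScalars R) := by
        intro g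
        obtain ⟨s, hs⟩ := hSsurj
          { toFun := fun h => Λ (h ∘ₗ g.restrictScalars R)
            map_add' := fun h₁ h₂ => by simp only [LinearMap.add_comp, map_add]
            map_smul' := fun c h => by
              simp only [RingHom.id_apply, LinearMap.smul_comp, map_smul] }
        refine ⟨s, fun h => ?_⟩
        have := LinearMap.congr_fun hs h
        simpa [Module.Dual.eval_apply] using this
      choose sg hsg using key
      have uniq : ∀ s s' : S, (∀ h : S →ₗ[R] R, h s = h s') → s = s' := by
        intro s s' hss
        apply hSinj
        refine LinearMap.ext fun h => ?_
        simpa [Module.Dual.eval_apply] using hss h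
      have Φadd : ∀ g₁ g₂ : M →ₗ[S] S, sg (g₁ + g₂) = sg g₁ + sg g₂ := by
        intro g₁ g₂
        apply uniq
        intro h
        rw [hsg, map_add, hsg, hsg, ← map_add Λ]
        congr 1
        ext m
        simp
      have Φsmul : ∀ (t : S) (g : M →ₗ[S] S), sg (t • g) = t • sg g := by
        intro t g
        apply uniq
        intro h
        rw [hsg]
        have h2 : h (t • sg g) = Λ ((h ∘ₗ LinearMap.mulLeft R t) ∘ₗ g.restrictScalars R) := by
          rw [← hsg g (h ∘ₗ LinearMap.mulLeft R t)]
          simp [smul_eq_mul]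
        rw [h2]
        all_goals first
          | rfl
          | (congr 1; refine LinearMap.ext fun m => ?_; simp [smul_eq_mul])
      obtain ⟨m₀, hm₀⟩ := hMsurj
        { toFun := sg
          map_add' := Φadd
          map_smul' := fun t g => by rw [RingHom.id_apply]; exact Φsmul t g }
      refine ⟨m₀, ?_⟩
      refine LinearMap.ext fun f => ?_
      rw [Module.Dual.eval_apply]
      set g : M →ₗ[S] S := toSdual f with hgdef
      have hgm₀ : g m₀ = sg g := by
        have := LinearMap.congr_fun hm₀ g
        simpa [Module.Dual.eval_apply] using this
      set h₀ : S →ₗ[R] R := clearDenom hr with hh₀def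
      have hcomp : h₀ ∘ₗ g.restrictScalars R = r • f := by
        ext m
        apply IsFractionRing.injective R (FractionRing R)
        rw [LinearMap.comp_apply, LinearMap.restrictScalars_apply, hh₀def, clearDenom_spec,
          hgdef, toSdual_coe, LinearMap.smul_apply, smul_eq_mul, map_mul, Algebra.smul_def]
      have e1 : h₀ (sg g) = r * Λ f := by
        rw [hsg g h₀, hcomp, map_smul, smul_eq_mul]
      have e2 : h₀ (sg g) = r * f m₀ := by
        rw [← hgm₀]
        apply IsFractionRing.injective R (FractionRing R)
        rw [hh₀def, clearDenom_spec, hgdef, toSdual_coe, map_mul, Algebra.smul_def]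
      have e3 : r * f m₀ = r * Λ f := by rw [← e2, e1]
      exact (mul_cancel_left_mem_nonZeroDivisors u.prop).mp e3
  · intro H
    exact H S (Module.Finite.self S) inferInstance
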